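/- Let X_u, V, V' be mutually independent random elements on a probability space, with V' distributed as V, let f be a measurable function and set Z = f(X_u, V) and Z' = f(X_u, V'). Let T be a measurable real-valued function with T(Z) square integrable. Then Var( E[T(Z) | X_u] ) = Cov( T(Z), T(Z') ), where E[·|X_u] denotes conditional expectation given the σ-algebra generated by X_u. -/

import Mathlib

open MeasureTheory ProbabilityTheory Filter

private lemma variance_congr_ae' {Ω : Type*} [MeasurableSpace Ω] {μ : Measure Ω}
    {X Y : Ω → ℝ} (h : X =ᵐ[μ] Y) : variance X μ = variance Y μ := by
  have h1 : (∫ x, X x ∂μ) = ∫ x, Y x ∂μ := integral_congr_ae h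
  unfold ProbabilityTheory.variance ProbabilityTheory.evariance
  rw [h1]
  congr 1
  exact lintegral_congr_ae (h.mono fun ω hω => by simp only [hω])

/-- **The Pick-Freeze identity** `Var(E[T(Z) | X_u]) = Cov(T(Z), T(Z'))`.
Here `X_u`, `V`, `V'` are mutually independent (equivalently: `V` and `V'` are
independent, and `X_u` is independent of the pair `(V, V')`), `V'` has the same
distribution as `V`, `Z = f(X_u, V)` and `Z' = f(X_u, V')`, and the covariance is
written as `E[T(Z) T(Z')] − E[T(Z)] E[T(Z')]`. -/
theorem variance_condexp_eq_cov_pickfreeze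
    {Ω α β 𝒳 : Type*} [MeasurableSpace Ω] [MeasurableSpace α] [MeasurableSpace β]
    [MeasurableSpace 𝒳]
    (μ : Measure Ω) [IsProbabilityMeasure μ]
    (Xu : Ω → α) (V V' : Ω → β)
    (hXu : Measurable Xu) (hV : Measurable V) (hV' : Measurable V')
    (hVV' : IndepFun V V' μ)
    (hXuVV' : IndepFun Xu (fun ω => (V ω, V' ω)) μ)
    (hcopy : μ.map V' = μ.map V)
    (f : α × β → 𝒳) (hf : Measurable f)
    (T : 𝒳 → ℝ) (hT : Measurable T)
    (Z Z' : Ω → 𝒳)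
    (hZ : Z = fun ω => f (Xu ω, V ω)) (hZ' : Z' = fun ω => f (Xu ω, V' ω))
    (hL2 : MemLp (fun ω => T (Z ω)) 2 μ) :
    variance (μ[fun ω => T (Z ω) | MeasurableSpace.comap Xu inferInstance]) μ =
      (∫ ω, T (Z ω) * T (Z' ω) ∂μ) -
        (∫ ω, T (Z ω) ∂μ) * (∫ ω, T (Z' ω) ∂μ) := by
  subst hZ hZ'
  set κ := μ.map Xu with hκ
  set ν := μ.map V with hν
  haveI : IsProbabilityMeasure κ := Measure.isProbabilityMeasure_map hXu.aemeasurable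
  haveI : IsProbabilityMeasure ν := Measure.isProbabilityMeasure_map hV.aemeasurable
  set G : α × β → ℝ := fun p => T (f p) with hGdef
  have hGm : Measurable G := hT.comp hf
  set g : α → ℝ := fun x => ∫ v, G (x, v) ∂ν with hgdef
  have hgm : StronglyMeasurable g := hGm.stronglyMeasurable.integral_prod_right'
  -- independence: pushforward identities
  have hXuV : IndepFun Xu V μ := hXuVV'.comp measurable_id measurable_fst
  have hXuV'2 : IndepFun Xu V' μ := hXuVV'.comp measurable_id measurable_snd
  have hVV'm : Measurable fun ω => (V ω, V' ω) := hV.prodMk hV'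
  have hmapXV : μ.map (fun ω => (Xu ω, V ω)) = κ.prod ν :=
    (indepFun_iff_map_prod_eq_prod_map_map hXu.aemeasurable hV.aemeasurable).mp hXuV
  have hmapXV' : μ.map (fun ω => (Xu ω, V' ω)) = κ.prod ν := by
    rw [(indepFun_iff_map_prod_eq_prod_map_map hXu.aemeasurable hV'.aemeasurable).mp hXuV'2,
      hcopy]
  have hmapVV' : μ.map (fun ω => (V ω, V' ω)) = ν.prod ν := by
    rw [(indepFun_iff_map_prod_eq_prod_map_map hV.aemeasurable hV'.aemeasurable).mp hVV', hcopy]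
  have hmapBig : μ.map (fun ω => (Xu ω, (V ω, V' ω))) = κ.prod (ν.prod ν) := by
    rw [(indepFun_iff_map_prod_eq_prod_map_map hXu.aemeasurable hVV'm.aemeasurable).mp hXuVV',
      hmapVV']
  -- L2 facts transported to the image measures
  have hG2 : MemLp G 2 (κ.prod ν) := by
    rw [← hmapXV]
    exact (memLp_map_measure_iff hGm.aestronglyMeasurable (hXu.prodMk hV).aemeasurable).mpr hL2
  have hGint : Integrable G (κ.prod ν) := hG2.integrable one_le_two
  have hGsq : Integrable (fun p => G p ^ 2) (κ.prod ν) := hG2.integrable_sq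
  -- g is in L2(κ) by Cauchy-Schwarz (variance nonneg)
  have hg2 : MemLp g 2 κ := by
    rw [memLp_two_iff_integrable_sq hgm.aestronglyMeasurable]
    have hasm : AEStronglyMeasurable (fun x => g x ^ 2) κ := by
      exact (hgm.aestronglyMeasurable).pow 2
    refine Integrable.mono' hGsq.integral_prod_left hasm ?_
    filter_upwards [hGsq.prod_right_ae] with x hx
    have hslice : AEStronglyMeasurable (fun v => G (x, v)) ν :=
      (hGm.comp measurable_prodMk_left).aestronglyMeasurable
    have hmem : MemLp (fun v => G (x, v)) 2 ν :=
      (memLp_two_iff_integrable_sq hslice).mpr hx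
    have hvar := variance_nonneg (fun v => G (x, v)) ν
    rw [variance_eq_sub hmem] at hvar
    have : g x ^ 2 ≤ ∫ v, G (x, v) ^ 2 ∂ν := by
      have := sub_nonneg.mp hvar
      simpa [hgdef] using this
    calc ‖g x ^ 2‖ = g x ^ 2 := by rw [Real.norm_eq_abs, abs_of_nonneg (sq_nonneg _)]
      _ ≤ _ := this
  -- the big product function
  have hG1m : Measurable (fun p : α × (β × β) => G (p.1, p.2.1)) :=
    hGm.comp (measurable_fst.prodMk (measurable_fst.comp measurable_snd))
  have hG2m : Measurable (fun p : α × (β × β) => G (p.1, p.2.2)) :=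
    hGm.comp (measurable_fst.prodMk (measurable_snd.comp measurable_snd))
  have hbigm : Measurable (fun ω => (Xu ω, (V ω, V' ω))) := hXu.prodMk hVV'm
  have hG1L2 : MemLp (fun p : α × (β × β) => G (p.1, p.2.1)) 2 (κ.prod (ν.prod ν)) := by
    rw [← hmapBig]
    exact (memLp_map_measure_iff hG1m.aestronglyMeasurable hbigm.aemeasurable).mpr hL2
  have hL2' : MemLp (fun ω => T (f (Xu ω, V' ω))) 2 μ := by
    have h := memLp_map_measure_iff (f := fun ω => (Xu ω, V' ω)) (g := G) (p := 2)
      (μ := μ) (by rw [hmapXV']; exact hGm.aestronglyMeasurable)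
      (hXu.prodMk hV').aemeasurable
    rw [hmapXV'] at h
    exact h.mp hG2
  have hG2L2 : MemLp (fun p : α × (β × β) => G (p.1, p.2.2)) 2 (κ.prod (ν.prod ν)) := by
    rw [← hmapBig]
    exact (memLp_map_measure_iff hG2m.aestronglyMeasurable hbigm.aemeasurable).mpr hL2'
  have hFint : Integrable (fun p : α × (β × β) => G (p.1, p.2.1) * G (p.1, p.2.2))
      (κ.prod (ν.prod ν)) := by
    rw [← memLp_one_iff_integrable]
    have := hG2L2.smul (φ := fun p : α × (β × β) => G (p.1, p.2.1)) hG1L2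
      (r := 1)
    exact this
  -- identify the conditional expectation
  have hm : MeasurableSpace.comap Xu inferInstance ≤ ‹MeasurableSpace Ω› := hXu.comap_le
  haveI : SigmaFinite (μ.trim hm) := inferInstance
  have hTZint : Integrable (fun ω => T (f (Xu ω, V ω))) μ := hL2.integrable one_le_two
  have hgκ : Integrable g κ := hGint.integral_prod_left
  have hgXint : Integrable (fun ω => g (Xu ω)) μ :=
    (integrable_map_measure hgm.aestronglyMeasurable hXu.aemeasurable).mp hgκ
  have hce : (fun ω => g (Xu ω)) =ᵐ[μ]
      μ[(fun ω => T (f (Xu ω, V ω))) | MeasurableSpace.comap Xu inferInstance] := by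
    refine ae_eq_condExp_of_forall_setIntegral_eq hm hTZint
      (fun s _ _ => hgXint.integrableOn) ?_ ?_
    · rintro s ⟨A, hA, rfl⟩ -
      have hpre : (fun ω => (Xu ω, V ω)) ⁻¹' (A ×ˢ Set.univ) = Xu ⁻¹' A := by
        ext ω; simp
      have h1 : ∫ ω in Xu ⁻¹' A, g (Xu ω) ∂μ = ∫ x in A, g x ∂κ :=
        (setIntegral_map hA hgm.aestronglyMeasurable hXu.aemeasurable).symm
      have h2 : ∫ ω in Xu ⁻¹' A, T (f (Xu ω, V ω)) ∂μ = ∫ p in A ×ˢ Set.univ, G p ∂(κ.prod ν) := by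
        rw [← hmapXV, setIntegral_map (hA.prod MeasurableSet.univ) hGm.aestronglyMeasurable
          (hXu.prodMk hV).aemeasurable, hpre]
      have h3 : ∫ p in A ×ˢ Set.univ, G p ∂(κ.prod ν) = ∫ x in A, g x ∂κ := by
        rw [setIntegral_prod _ hGint.integrableOn]
        simp only [Measure.restrict_univ]
        rfl
      rw [h1, h2, h3]
    · exact StronglyMeasurable.aestronglyMeasurable
        (hgm.comp_measurable (measurable_iff_comap_le.mpr le_rfl))
  have hgX2 : MemLp (fun ω => g (Xu ω)) 2 μ :=
    (memLp_map_measure_iff hgm.aestronglyMeasurable hXu.aemeasurable).mp hg2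
  rw [← variance_congr_ae' hce, variance_eq_sub hgX2]
  -- compute all the integrals
  have e1 : ∫ ω, g (Xu ω) ∂μ = ∫ x, g x ∂κ :=
    (integral_map hXu.aemeasurable hgm.aestronglyMeasurable).symm
  have e2 : (∫ ω, ((fun ω => g (Xu ω)) ^ 2) ω ∂μ) = ∫ x, g x ^ 2 ∂κ := by
    simp only [Pi.pow_apply]
    exact (integral_map hXu.aemeasurable (hgm.aestronglyMeasurable.pow 2)).symm
  have e3 : ∫ ω, T (f (Xu ω, V ω)) ∂μ = ∫ x, g x ∂κ := by
    rw [show (fun ω => T (f (Xu ω, V ω))) = fun ω => G ((fun ω => (Xu ω, V ω)) ω) from rfl,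
      ← integral_map (hXu.prodMk hV).aemeasurable hGm.aestronglyMeasurable, hmapXV,
      integral_prod _ hGint]
  have e4 : ∫ ω, T (f (Xu ω, V' ω)) ∂μ = ∫ x, g x ∂κ := by
    rw [show (fun ω => T (f (Xu ω, V' ω))) = fun ω => G ((fun ω => (Xu ω, V' ω)) ω) from rfl,
      ← integral_map (hXu.prodMk hV').aemeasurable hGm.aestronglyMeasurable, hmapXV',
      integral_prod _ hGint]
  have e5 : ∫ ω, T (f (Xu ω, V ω)) * T (f (Xu ω, V' ω)) ∂μ = ∫ x, g x * g x ∂κ := by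
    have hFm : Measurable (fun p : α × (β × β) => G (p.1, p.2.1) * G (p.1, p.2.2)) :=
      hG1m.mul hG2m
    rw [show (fun ω => T (f (Xu ω, V ω)) * T (f (Xu ω, V' ω)))
        = fun ω => (fun p : α × (β × β) => G (p.1, p.2.1) * G (p.1, p.2.2))
          ((fun ω => (Xu ω, (V ω, V' ω))) ω) from rfl,
      ← integral_map hbigm.aemeasurable hFm.aestronglyMeasurable, hmapBig,
      integral_prod _ hFint]
    refine integral_congr_ae (Filter.Eventually.of_forall fun x => ?_)
    exact integral_prod_mul (μ := ν) (ν := ν) (fun v => G (x, v)) (fun v => G (x, v))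
  rw [e1, e2, e3, e4, e5]
  have : ∫ x, g x ^ 2 ∂κ = ∫ x, g x * g x ∂κ := by
    refine integral_congr_ae (Filter.Eventually.of_forall fun x => ?_)
    simp [sq]
  rw [this, sq]
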